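/- The matching DA(P) is Pareto-efficient if and only if the envy digraph G^DA(P) contains no directed cycle. -/

import Mathlib

/-!
A school choice problem: finitely many students `I` and schools `S`
(with a distinguished null school of quota `|I|`).  Each student `i` has a
strict preference over schools represented by its rank function
`rk i : S → ℕ` (a bijection onto `{1, …, |S|}`, where rank 1 is the most
preferred school); each school `s` has a quota `quota s ≥ 1` and a strict
priority over students represented by `prio s : I → ℕ`
(`i ▷_s j` iff `prio s i < prio s j`).
-/
structure SchoolChoice (I S : Type) [Fintype I] [Fintype S]
    [DecidableEq I] [DecidableEq S] where
  nullSchool : S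
  quota : S → ℕ
  rk : I → S → ℕ
  prio : S → I → ℕ
  quota_pos : ∀ s : S, 1 ≤ quota s
  quota_null : quota nullSchool = Fintype.card I
  rk_inj : ∀ i : I, Function.Injective (rk i)
  rk_mem : ∀ (i : I) (s : S), rk i s ∈ Finset.Icc 1 (Fintype.card S)
  prio_inj : ∀ s : S, Function.Injective (prio s)

namespace SchoolChoice

open scoped Classical

variable {I S : Type} [Fintype I] [Fintype S] [DecidableEq I] [DecidableEq S]

/-- `μ` is a matching: no school is assigned more students than its quota. -/
def IsMatching (P : SchoolChoice I S) (μ : I → S) : Prop :=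
  ∀ s : S, (Finset.univ.filter fun i => μ i = s).card ≤ P.quota s

/-- Given the sets `R i` of schools that have rejected student `i` so far,
student `i` proposes to her most preferred school that has not rejected her. -/
noncomputable def propose (P : SchoolChoice I S) (R : I → Finset S) (i : I) : S :=
  if h : (Finset.univ \ R i).Nonempty then
    (Finset.exists_min_image (Finset.univ \ R i) (P.rk i) h).choose
  else P.nullSchool

/-- At the DA round with rejection state `R`, school `s` rejects student `i`:
`i` applies to `s` and at least `quota s` applicants to `s` have higher priority. -/
def rejectsAt (P : SchoolChoice I S) (R : I → Finset S) (s : S) (i : I) : Prop :=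
  P.propose R i = s ∧
    P.quota s ≤ (Finset.univ.filter fun j =>
      P.propose R j = s ∧ P.prio s j < P.prio s i).card

/-- One round of student-proposing Deferred Acceptance: record new rejections. -/
noncomputable def stepR (P : SchoolChoice I S) (R : I → Finset S) : I → Finset S :=
  fun i => R i ∪ (Finset.univ.filter fun s => P.rejectsAt R s i)

/-- Rejection state after `n` rounds of Deferred Acceptance. -/
noncomputable def daR (P : SchoolChoice I S) : ℕ → I → Finset S
  | 0 => fun _ => (∅ : Finset S)
  | n + 1 => P.stepR (P.daR n)

/-- The outcome of the student-proposing Deferred Acceptance algorithm: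
iterate rounds until no rejection occurs (which happens within
`|I|·|S| + 1` rounds); each student is matched to the school holding her. -/
noncomputable def DA (P : SchoolChoice I S) : I → S :=
  P.propose (P.daR (Fintype.card I * Fintype.card S + 1))

/-- A matching `ν` is stable-dominating if every student weakly prefers
`ν` to the DA outcome. -/
def StableDominating (P : SchoolChoice I S) (ν : I → S) : Prop :=
  P.IsMatching ν ∧ ∀ i : I, P.rk i (ν i) ≤ P.rk i (P.DA i)

/-- Student `i` is unimprovable: every stable-dominating matching assigns `i`
to her DA school. -/
def Unimprovable (P : SchoolChoice I S) (i : I) : Prop :=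
  ∀ ν : I → S, P.StableDominating ν → ν i = P.DA i

/-- Edge of the envy digraph `G^DA(P)`: `i` prefers `j`'s DA school to her own. -/
def Envy (P : SchoolChoice I S) (i j : I) : Prop :=
  P.rk i (P.DA j) < P.rk i (P.DA i)

/-- Student `i` lies on a directed cycle of the envy digraph `G^DA(P)`. -/
def OnCycle (P : SchoolChoice I S) (i : I) : Prop :=
  ∃ (m : ℕ) (c : ℕ → I), 0 < m ∧ c 0 = i ∧ c m = i ∧
    ∀ k < m, P.Envy (c k) (c (k + 1))

/-- Student `i` desires school `s` in matching `μ`. -/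
def Desires (P : SchoolChoice I S) (μ : I → S) (i : I) (s : S) : Prop :=
  P.rk i s < P.rk i (μ i)

/-- `μ` is non-wasteful: every desired school is filled to quota. -/
def NonWasteful (P : SchoolChoice I S) (μ : I → S) : Prop :=
  ∀ s : S, (∃ i : I, P.Desires μ i s) →
    (Finset.univ.filter fun i => μ i = s).card = P.quota s

/-- `μ` is stable: a non-wasteful matching with no priority violations. -/
def Stable (P : SchoolChoice I S) (μ : I → S) : Prop :=
  P.IsMatching μ ∧ P.NonWasteful μ ∧
    ¬ ∃ (i j : I) (s : S), P.Desires μ i s ∧ μ j = s ∧ P.prio s i < P.prio s j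

/-- `μ` Pareto-dominates `ν`. -/
def ParetoDominates (P : SchoolChoice I S) (μ ν : I → S) : Prop :=
  (∀ i : I, P.rk i (μ i) ≤ P.rk i (ν i)) ∧ ∃ i : I, P.rk i (μ i) < P.rk i (ν i)

/-- `μ` is a Pareto-efficient matching. -/
def ParetoEfficient (P : SchoolChoice I S) (μ : I → S) : Prop :=
  P.IsMatching μ ∧ ∀ ν : I → S, P.IsMatching ν → ¬ P.ParetoDominates ν μ

end SchoolChoice

namespace SchoolChoice

open scoped Classical

variable {I S : Type} [Fintype I] [Fintype S] [DecidableEq I] [DecidableEq S]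
variable (P : SchoolChoice I S)

lemma propose_mem_spec (R : I → Finset S) (i : I)
    (h : (Finset.univ \ R i).Nonempty) :
    P.propose R i ∈ Finset.univ \ R i ∧
      ∀ s ∈ Finset.univ \ R i, P.rk i (P.propose R i) ≤ P.rk i s := by
  rw [propose, dif_pos h]
  exact (Finset.exists_min_image (Finset.univ \ R i) (P.rk i) h).choose_spec

lemma propose_congr {R R' : I → Finset S} (i : I) (h : R i = R' i) :
    P.propose R i = P.propose R' i := by
  simp only [propose, h]

lemma not_rejects_null (R : I → Finset S) (i : I) :
    ¬ P.rejectsAt R P.nullSchool i := by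
  rintro ⟨-, hc⟩
  have hsub : (Finset.univ.filter fun j => P.propose R j = P.nullSchool ∧
      P.prio P.nullSchool j < P.prio P.nullSchool i) ⊆ Finset.univ.erase i := by
    intro j hj
    simp only [Finset.mem_filter] at hj
    refine Finset.mem_erase.2 ⟨?_, Finset.mem_univ j⟩
    rintro rfl
    exact lt_irrefl _ hj.2.2
  have hle := Finset.card_le_card hsub
  rw [Finset.card_erase_of_mem (Finset.mem_univ i), Finset.card_univ] at hle
  have hq := P.quota_null
  have hpos : 0 < Fintype.card I := Fintype.card_pos_iff.2 ⟨i⟩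
  omega

lemma null_not_mem_daR (n : ℕ) (i : I) : P.nullSchool ∉ P.daR n i := by
  induction n with
  | zero => simp [daR]
  | succ n ih =>
    simp only [daR, stepR, Finset.mem_union, Finset.mem_filter]
    rintro (h | ⟨-, h⟩)
    · exact ih h
    · exact P.not_rejects_null _ i h

lemma daR_compl_nonempty (n : ℕ) (i : I) : (Finset.univ \ P.daR n i).Nonempty :=
  ⟨P.nullSchool, Finset.mem_sdiff.2 ⟨Finset.mem_univ _, P.null_not_mem_daR n i⟩⟩

lemma propose_daR_not_mem (n : ℕ) (i : I) : P.propose (P.daR n) i ∉ P.daR n i := by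
  have h := (P.propose_mem_spec (P.daR n) i (P.daR_compl_nonempty n i)).1
  exact (Finset.mem_sdiff.1 h).2

lemma propose_daR_min (n : ℕ) (i : I) (s : S) (hs : s ∉ P.daR n i) :
    P.rk i (P.propose (P.daR n) i) ≤ P.rk i s :=
  (P.propose_mem_spec (P.daR n) i (P.daR_compl_nonempty n i)).2 s
    (Finset.mem_sdiff.2 ⟨Finset.mem_univ _, hs⟩)

lemma daR_subset_succ (n : ℕ) (i : I) : P.daR n i ⊆ P.daR (n + 1) i :=
  fun _ hs => Finset.mem_union_left _ hs

lemma daR_fix_propagate {n : ℕ} (h : P.daR (n + 1) = P.daR n) (k : ℕ) :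
    P.daR (n + k) = P.daR n := by
  induction k with
  | zero => rfl
  | succ k ih =>
    show P.stepR (P.daR (n + k)) = _
    rw [ih]
    exact h

lemma exists_fix :
    ∃ n < Fintype.card I * Fintype.card S + 1, P.daR (n + 1) = P.daR n := by
  by_contra h
  push_neg at h
  set N := Fintype.card I * Fintype.card S + 1 with hN
  have key : ∀ n, n ≤ N → n ≤ ∑ i : I, (P.daR n i).card := by
    intro n
    induction n with
    | zero => intro _; simp
    | succ n ih =>
      intro hn
      have hne := h n (by omega)
      obtain ⟨i, hi⟩ : ∃ i, P.daR n i ≠ P.daR (n + 1) i := by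
        by_contra hall
        push_neg at hall
        exact hne (funext fun i => (hall i).symm)
      have hlt : ∑ i : I, (P.daR n i).card < ∑ i : I, (P.daR (n + 1) i).card := by
        refine Finset.sum_lt_sum (fun i _ => Finset.card_le_card (P.daR_subset_succ n i))
          ⟨i, Finset.mem_univ i, ?_⟩
        exact Finset.card_lt_card (Finset.ssubset_iff_subset_ne.2 ⟨P.daR_subset_succ n i, hi⟩)
      have := ih (by omega)
      omega
  have hbound : ∑ i : I, (P.daR N i).card ≤ Fintype.card I * Fintype.card S := by
    calc ∑ i : I, (P.daR N i).card ≤ ∑ _i : I, Fintype.card S :=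
          Finset.sum_le_sum fun i _ => Finset.card_le_univ _
      _ = Fintype.card I * Fintype.card S := by
          simp [Finset.sum_const, Finset.card_univ, mul_comm]
  have := key N le_rfl
  omega

lemma daR_top_fixed :
    P.daR (Fintype.card I * Fintype.card S + 1 + 1)
      = P.daR (Fintype.card I * Fintype.card S + 1) := by
  obtain ⟨n, hn, hfix⟩ := P.exists_fix
  have h1 : P.daR (Fintype.card I * Fintype.card S + 1) = P.daR n := by
    have := P.daR_fix_propagate hfix (Fintype.card I * Fintype.card S + 1 - n)
    rwa [Nat.add_sub_cancel' (by omega)] at this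
  have h2 : P.daR (Fintype.card I * Fintype.card S + 1 + 1) = P.daR n := by
    have := P.daR_fix_propagate hfix (Fintype.card I * Fintype.card S + 1 + 1 - n)
    rwa [Nat.add_sub_cancel' (by omega)] at this
  rw [h1, h2]

lemma not_rejectsAt_top (s : S) (i : I) :
    ¬ P.rejectsAt (P.daR (Fintype.card I * Fintype.card S + 1)) s i := by
  intro hr
  have hmem : s ∈ P.daR (Fintype.card I * Fintype.card S + 1 + 1) i := by
    simp only [daR, stepR, Finset.mem_union, Finset.mem_filter]
    exact Or.inr (Finset.mem_filter.2 ⟨Finset.mem_univ s, hr⟩)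
  rw [P.daR_top_fixed] at hmem
  rw [← hr.1] at hmem
  exact P.propose_daR_not_mem _ i hmem

lemma isMatching_DA : P.IsMatching P.DA := by
  intro s
  by_contra hlt
  push_neg at hlt
  have hne : (Finset.univ.filter fun i => P.DA i = s).Nonempty := by
    rw [← Finset.card_pos]
    have := P.quota_pos s
    omega
  obtain ⟨i, hiA, hmax⟩ :=
    Finset.exists_max_image (Finset.univ.filter fun i => P.DA i = s) (P.prio s) hne
  refine P.not_rejectsAt_top s i ⟨(Finset.mem_filter.1 hiA).2, ?_⟩
  have hsub : (Finset.univ.filter fun i => P.DA i = s).erase i ⊆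
      Finset.univ.filter fun j =>
        P.propose (P.daR (Fintype.card I * Fintype.card S + 1)) j = s ∧
          P.prio s j < P.prio s i := by
    intro j hj
    obtain ⟨hji, hjA⟩ := Finset.mem_erase.1 hj
    have hDAj : P.DA j = s := (Finset.mem_filter.1 hjA).2
    refine Finset.mem_filter.2 ⟨Finset.mem_univ j, hDAj, ?_⟩
    exact lt_of_le_of_ne (hmax j hjA) fun h => hji (P.prio_inj s h)
  have hcard := Finset.card_le_card hsub
  rw [Finset.card_erase_of_mem hiA] at hcard
  omega

lemma count_persist (n : ℕ) (s : S)
    (h : P.quota s ≤ (Finset.univ.filter fun j => P.propose (P.daR n) j = s).card) :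
    P.quota s ≤ (Finset.univ.filter fun j => P.propose (P.daR (n + 1)) j = s).card := by
  set B := Finset.univ.filter fun j => P.propose (P.daR n) j = s with hB
  set K := Finset.univ.filter
      (fun j => P.propose (P.daR n) j = s ∧ ¬ P.rejectsAt (P.daR n) s j) with hK
  have hkeep : ∀ j ∈ K, P.propose (P.daR (n + 1)) j = s := by
    intro j hj
    obtain ⟨-, hjs, hjr⟩ := Finset.mem_filter.1 hj
    have hflt : (Finset.univ.filter fun s' => P.rejectsAt (P.daR n) s' j) = ∅ := by
      rw [Finset.filter_eq_empty_iff]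
      intro s' _ hr
      have hs' : s' = s := hr.1.symm.trans hjs
      exact hjr (hs' ▸ hr)
    have hstep : P.daR (n + 1) j = P.daR n j := by
      show P.daR n j ∪ _ = P.daR n j
      rw [hflt, Finset.union_empty]
    rw [P.propose_congr j hstep]
    exact hjs
  have hcardK : P.quota s ≤ K.card := by
    by_contra hK'
    push_neg at hK'
    have hKB : K ⊆ B := fun j hj =>
      Finset.mem_filter.2 ⟨Finset.mem_univ _, (Finset.mem_filter.1 hj).2.1⟩
    have hBK : (B \ K).Nonempty := by
      rw [Finset.sdiff_nonempty]
      intro hsub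
      have := Finset.card_le_card hsub
      omega
    obtain ⟨j, hjmem, hjmin⟩ := Finset.exists_min_image (B \ K) (P.prio s) hBK
    obtain ⟨hjB, hjK⟩ := Finset.mem_sdiff.1 hjmem
    have hjs : P.propose (P.daR n) j = s := (Finset.mem_filter.1 hjB).2
    have hrej : P.rejectsAt (P.daR n) s j := by
      by_contra hr
      exact hjK (Finset.mem_filter.2 ⟨Finset.mem_univ _, hjs, hr⟩)
    have hsub2 : (Finset.univ.filter fun j' =>
        P.propose (P.daR n) j' = s ∧ P.prio s j' < P.prio s j) ⊆ K := by
      intro j' hj'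
      obtain ⟨-, hj's, hj'lt⟩ := Finset.mem_filter.1 hj'
      by_contra hj'K
      have hj'B : j' ∈ B := Finset.mem_filter.2 ⟨Finset.mem_univ _, hj's⟩
      have := hjmin j' (Finset.mem_sdiff.2 ⟨hj'B, hj'K⟩)
      omega
    have h1 := Finset.card_le_card hsub2
    have h2 := hrej.2
    omega
  calc P.quota s ≤ K.card := hcardK
    _ ≤ (Finset.univ.filter fun j => P.propose (P.daR (n + 1)) j = s).card :=
        Finset.card_le_card fun j hj =>
          Finset.mem_filter.2 ⟨Finset.mem_univ _, hkeep j hj⟩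

lemma count_persist_add (n k : ℕ) (s : S)
    (h : P.quota s ≤ (Finset.univ.filter fun j => P.propose (P.daR n) j = s).card) :
    P.quota s ≤ (Finset.univ.filter fun j => P.propose (P.daR (n + k)) j = s).card := by
  induction k with
  | zero => exact h
  | succ k ih => exact P.count_persist (n + k) s ih

lemma rejected_of_mem_daR {n : ℕ} {i : I} {s : S} (h : s ∈ P.daR n i) :
    ∃ m < n, P.rejectsAt (P.daR m) s i := by
  induction n with
  | zero => simp [daR] at h
  | succ n ih =>
    simp only [daR, stepR, Finset.mem_union, Finset.mem_filter] at h
    rcases h with h | ⟨-, h⟩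
    · obtain ⟨m, hm, hr⟩ := ih h
      exact ⟨m, by omega, hr⟩
    · exact ⟨n, by omega, h⟩

lemma nonWasteful_DA : P.NonWasteful P.DA := by
  intro s hs
  obtain ⟨i, hi⟩ := hs
  have hi' : P.rk i s < P.rk i (P.propose (P.daR (Fintype.card I * Fintype.card S + 1)) i) := hi
  have hmem : s ∈ P.daR (Fintype.card I * Fintype.card S + 1) i := by
    by_contra hsmem
    have := P.propose_daR_min (Fintype.card I * Fintype.card S + 1) i s hsmem
    omega
  obtain ⟨m, hm, hrej⟩ := P.rejected_of_mem_daR hmem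
  have hcount : P.quota s ≤ (Finset.univ.filter fun j => P.propose (P.daR m) j = s).card := by
    refine le_trans hrej.2 (Finset.card_le_card fun j hj => ?_)
    exact Finset.mem_filter.2 ⟨Finset.mem_univ _, (Finset.mem_filter.1 hj).2.1⟩
  have hcountN : P.quota s ≤ (Finset.univ.filter fun j =>
      P.propose (P.daR (Fintype.card I * Fintype.card S + 1)) j = s).card := by
    have := P.count_persist_add m (Fintype.card I * Fintype.card S + 1 - m) s hcount
    rwa [Nat.add_sub_cancel' (le_of_lt hm)] at this
  exact le_antisymm (P.isMatching_DA s) hcountN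

end SchoolChoice

lemma exists_perm_of_cycle {α : Type} {m : ℕ} (d : ℕ → α)
    (hm : 0 < m) (hinj : ∀ a, a < m → ∀ b, b < m → d a = d b → a = b) :
    ∃ f : α → α, Function.Injective f ∧ (∀ k, k < m → f (d k) = d ((k + 1) % m)) ∧
      ∀ i, (∀ k, k < m → d k ≠ i) → f i = i := by
  classical
  have hmodinj : ∀ a, a < m → ∀ b, b < m → (a + 1) % m = (b + 1) % m → a = b := by
    intro a ha b hb hab
    rcases eq_or_lt_of_le (Nat.succ_le_of_lt ha) with h1 | h1 <;>
      rcases eq_or_lt_of_le (Nat.succ_le_of_lt hb) with h2 | h2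
    · omega
    · have h1' : a + 1 = m := h1
      rw [h1', Nat.mod_self, Nat.mod_eq_of_lt h2] at hab; omega
    · have h2' : b + 1 = m := h2
      rw [h2', Nat.mod_self, Nat.mod_eq_of_lt h1] at hab; omega
    · rw [Nat.mod_eq_of_lt h1, Nat.mod_eq_of_lt h2] at hab; omega
  refine ⟨fun i => if h : ∃ k, k < m ∧ d k = i then d ((Nat.find h + 1) % m) else i,
    ?_, ?_, ?_⟩
  · intro i j hij
    simp only [] at hij
    by_cases hi : ∃ k, k < m ∧ d k = i <;> by_cases hj : ∃ k, k < m ∧ d k = j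
    · simp only [dif_pos hi, dif_pos hj] at hij
      obtain ⟨hki, hdi⟩ := Nat.find_spec hi
      obtain ⟨hkj, hdj⟩ := Nat.find_spec hj
      have heq := hinj _ (Nat.mod_lt _ hm) _ (Nat.mod_lt _ hm) hij
      have := hmodinj _ hki _ hkj heq
      rw [← hdi, ← hdj, this]
    · simp only [dif_pos hi, dif_neg hj] at hij
      exact absurd ⟨(Nat.find hi + 1) % m, Nat.mod_lt _ hm, hij⟩ hj
    · simp only [dif_neg hi, dif_pos hj] at hij
      exact absurd ⟨(Nat.find hj + 1) % m, Nat.mod_lt _ hm, hij.symm⟩ hi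
    · simpa only [dif_neg hi, dif_neg hj] using hij
  · intro k hk
    have h : ∃ k', k' < m ∧ d k' = d k := ⟨k, hk, rfl⟩
    show (if h : ∃ k', k' < m ∧ d k' = d k then d ((Nat.find h + 1) % m) else d k) = _
    rw [dif_pos h]
    obtain ⟨hk', hd'⟩ := Nat.find_spec h
    rw [hinj _ hk' _ hk hd']
  · intro i h
    show (if hh : ∃ k, k < m ∧ d k = i then d ((Nat.find hh + 1) % m) else i) = i
    rw [dif_neg]
    rintro ⟨k, hk, hdk⟩
    exact h k hk hdk

/-- The matching `DA(P)` is Pareto-efficient if and only if the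
envy digraph `G^DA(P)` contains no directed cycle. -/
theorem da_paretoEfficient_iff_acyclic {I S : Type} [Fintype I] [Fintype S]
    [DecidableEq I] [DecidableEq S] (P : SchoolChoice I S) :
    P.ParetoEfficient P.DA ↔ ¬ ∃ i : I, P.OnCycle i := by
  classical
  constructor
  · rintro ⟨hmatch, heff⟩ ⟨i, m, c, hm, hc0, hcm, hcyc⟩
    -- extract a minimal cycle
    have hQex : ∃ m : ℕ, 0 < m ∧ ∃ c : ℕ → I, c m = c 0 ∧
        ∀ k < m, P.Envy (c k) (c (k + 1)) :=
      ⟨m, hm, c, hcm.trans hc0.symm, hcyc⟩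
    obtain ⟨hm₀pos, d, hd0, hdcyc⟩ := Nat.find_spec hQex
    set m₀ := Nat.find hQex with hm₀def
    have key : ∀ a b : ℕ, a < b → b < m₀ → d a ≠ d b := by
      intro a b hab hb hEq
      refine Nat.find_min hQex (show b - a < m₀ by omega)
        ⟨by omega, fun k => d (a + k), ?_, ?_⟩
      · show d (a + (b - a)) = d (a + 0)
        rw [show a + (b - a) = b by omega]
        simpa using hEq.symm
      · intro k hk
        exact hdcyc (a + k) (by omega)
    have hinj : ∀ a, a < m₀ → ∀ b, b < m₀ → d a = d b → a = b := by
      intro a ha b hb hab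
      rcases Nat.lt_trichotomy a b with h | h | h
      · exact absurd hab (key a b h hb)
      · exact h
      · exact absurd hab.symm (key b a h ha)
    obtain ⟨f, hfinj, hfd, hfid⟩ := exists_perm_of_cycle d hm₀pos hinj
    have hfbij : Function.Bijective f := Finite.injective_iff_bijective.1 hfinj
    have hweak : ∀ i, P.rk i (P.DA (f i)) ≤ P.rk i (P.DA i) := by
      intro i
      by_cases h : ∃ k, k < m₀ ∧ d k = i
      · obtain ⟨k, hk, rfl⟩ := h
        rw [hfd k hk]
        have h2 : P.rk (d k) (P.DA (d (k + 1))) < P.rk (d k) (P.DA (d k)) := hdcyc k hk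
        rcases eq_or_lt_of_le (Nat.succ_le_of_lt hk) with h1 | h1
        · have h1' : k + 1 = m₀ := h1
          rw [show (k + 1) % m₀ = 0 from by rw [h1']; exact Nat.mod_self _]
          rw [h1', hd0] at h2
          exact le_of_lt h2
        · rw [Nat.mod_eq_of_lt h1]
          exact le_of_lt h2
      · push_neg at h
        rw [hfid i h]
    have hstrict : P.rk (d 0) (P.DA (f (d 0))) < P.rk (d 0) (P.DA (d 0)) := by
      rw [hfd 0 hm₀pos]
      have h2 : P.rk (d 0) (P.DA (d 1)) < P.rk (d 0) (P.DA (d 0)) := hdcyc 0 hm₀pos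
      rcases eq_or_lt_of_le (Nat.succ_le_of_lt hm₀pos) with h1 | h1
      · have h1' : 0 + 1 = m₀ := h1
        rw [show (0 + 1) % m₀ = 0 from by rw [h1']; exact Nat.mod_self _]
        rwa [show (1 : ℕ) = m₀ from h1, hd0] at h2
      · have h1' : 0 + 1 < m₀ := h1
        rw [Nat.mod_eq_of_lt h1']
        exact h2
    have hcardeq : ∀ s, (Finset.univ.filter fun i => P.DA (f i) = s).card
        = (Finset.univ.filter fun i => P.DA i = s).card := by
      intro s
      refine Finset.card_bij (fun i _ => f i) ?_ ?_ ?_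
      · intro i hi
        exact Finset.mem_filter.2 ⟨Finset.mem_univ _, (Finset.mem_filter.1 hi).2⟩
      · intro a _ b _ hab
        exact hfinj hab
      · intro j hj
        obtain ⟨i, rfl⟩ := hfbij.2 j
        exact ⟨i, Finset.mem_filter.2 ⟨Finset.mem_univ _, (Finset.mem_filter.1 hj).2⟩, rfl⟩
    refine heff (fun i => P.DA (f i)) (fun s => ?_) ⟨hweak, ⟨d 0, hstrict⟩⟩
    rw [hcardeq s]
    exact hmatch s
  · intro hnc
    refine ⟨P.isMatching_DA, ?_⟩
    rintro ν hν ⟨hle, i₀, hi₀⟩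
    set A := Finset.univ.filter (fun i => P.rk i (ν i) < P.rk i (P.DA i)) with hA
    have hi₀A : i₀ ∈ A := Finset.mem_filter.2 ⟨Finset.mem_univ _, hi₀⟩
    have hstep : ∀ i ∈ A, ∃ j ∈ A, P.Envy i j := by
      intro i hiA
      have hi : P.rk i (ν i) < P.rk i (P.DA i) := (Finset.mem_filter.1 hiA).2
      by_cases hex : ∃ j, P.DA j = ν i ∧ ν j ≠ ν i
      · obtain ⟨j, hDAj, hνj⟩ := hex
        have hjA : j ∈ A := by
          refine Finset.mem_filter.2 ⟨Finset.mem_univ _, ?_⟩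
          have h2 : ν j ≠ P.DA j := fun h => hνj (h.trans hDAj)
          exact lt_of_le_of_ne (hle j) fun h => h2 (P.rk_inj j h)
        refine ⟨j, hjA, ?_⟩
        show P.rk i (P.DA j) < P.rk i (P.DA i)
        rw [hDAj]
        exact hi
      · exfalso
        push_neg at hex
        have hfull := P.nonWasteful_DA (ν i) ⟨i, hi⟩
        have hiDA : i ∉ Finset.univ.filter fun j => P.DA j = ν i := by
          simp only [Finset.mem_filter]
          rintro ⟨-, h⟩
          rw [← h] at hi
          exact lt_irrefl _ hi
        have hsub : insert i (Finset.univ.filter fun j => P.DA j = ν i) ⊆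
            Finset.univ.filter fun j => ν j = ν i := by
          intro j hj
          rcases Finset.mem_insert.1 hj with rfl | hj
          · exact Finset.mem_filter.2 ⟨Finset.mem_univ _, rfl⟩
          · exact Finset.mem_filter.2 ⟨Finset.mem_univ _, hex j (Finset.mem_filter.1 hj).2⟩
        have hcard := Finset.card_le_card hsub
        rw [Finset.card_insert_of_notMem hiDA, hfull] at hcard
        have := hν (ν i)
        omega
    have hstep' : ∀ i, ∃ j, i ∈ A → j ∈ A ∧ P.Envy i j := by
      intro i
      by_cases h : i ∈ A
      · obtain ⟨j, hj1, hj2⟩ := hstep i h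
        exact ⟨j, fun _ => ⟨hj1, hj2⟩⟩
      · exact ⟨i, fun h' => absurd h' h⟩
    choose g hg using hstep'
    have horb : ∀ k, g^[k] i₀ ∈ A := by
      intro k
      induction k with
      | zero => simpa using hi₀A
      | succ k ih =>
        rw [Function.iterate_succ_apply']
        exact (hg _ ih).1
    obtain ⟨a, b, hab, heq⟩ : ∃ a b : ℕ, a < b ∧ g^[a] i₀ = g^[b] i₀ := by
      obtain ⟨a, b, hne, heq⟩ := Fintype.exists_ne_map_eq_of_card_lt
        (fun k : Fin (Fintype.card I + 1) => g^[k.val] i₀) (by simp)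
      rcases lt_or_gt_of_ne hne with h | h
      · exact ⟨a.val, b.val, h, heq⟩
      · exact ⟨b.val, a.val, h, heq.symm⟩
    refine hnc ⟨g^[a] i₀, b - a, fun k => g^[a + k] i₀, by omega, rfl, ?_, ?_⟩
    · show g^[a + (b - a)] i₀ = g^[a] i₀
      rw [show a + (b - a) = b by omega]
      exact heq.symm
    · intro k hk
      show P.Envy (g^[a + k] i₀) (g^[a + (k + 1)] i₀)
      have hit : g^[a + (k + 1)] i₀ = g (g^[a + k] i₀) := by
        rw [show a + (k + 1) = (a + k) + 1 by omega, Function.iterate_succ_apply']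
      rw [hit]
      exact (hg _ (horb (a + k))).2
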